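/- Let k be a field of positive characteristic p, R = k[x_1, x_2, ...]/(x_1^p, x_2^p, ...), and α : R → R the shift homomorphism x_i ↦ x_{i+1}. Then restriction of scalars α_* on the category of locally finite R-modules admits a left adjoint given by extension of scalars M ↦ R ⊗_{α} M, and this extension of scalars functor also preserves locally finite modules. -/

import Mathlib

/-! STATEMENT 5: restriction of scalars along the shift `α : R → R`, viewed as a
functor on the category of locally finite `R`-modules, admits a left adjoint given by
extension of scalars `M ↦ R ⊗_α M`, and this extension of scalars functor also
preserves locally finite modules (i.e. it restricts to the full subcategory of locally
finite modules). -/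

open MvPolynomial

/-- The ring `k[x₁, x₂, x₃, ...]/(x₁^p, x₂^p, x₃^p, ...)`. -/
abbrev TruncPoly (k : Type) [Field k] (p : ℕ) : Type :=
  MvPolynomial ℕ k ⧸ Ideal.span (Set.range fun i : ℕ => (X i : MvPolynomial ℕ k) ^ p)

/-- The image of the generator `xᵢ` in `k[x₁, x₂, ...]/(x₁^p, x₂^p, ...)`. -/
noncomputable def xgen (k : Type) [Field k] (p : ℕ) (i : ℕ) : TruncPoly k p :=
  Ideal.Quotient.mk _ (X i)

/-- An `R`-module is *locally finite* if every element is annihilated by all but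
finitely many of the generators `xᵢ`. -/
def IsLocallyFinite (k : Type) [Field k] (p : ℕ) (M : Type)
    [AddCommGroup M] [Module (TruncPoly k p) M] : Prop :=
  ∀ m : M, {i : ℕ | xgen k p i • m ≠ 0}.Finite

open CategoryTheory

/-- The category of locally finite modules over `R = k[x₁, x₂, ...]/(xᵢ^p)`, as a full
subcategory of the category of `R`-modules. -/
abbrev LocFinMod (k : Type) [Field k] (p : ℕ) : Type 1 :=
  CategoryTheory.ObjectProperty.FullSubcategory
    (fun M : ModuleCat.{0} (TruncPoly k p) => IsLocallyFinite k p M.carrier)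

section Aux

set_option synthInstance.maxHeartbeats 1000000
set_option maxHeartbeats 1000000

open scoped ChangeOfRings in
/-- Key computation for extension of scalars. -/
lemma ext_smul_eq {R S : Type} [CommRing R] [CommRing S] (f : R →+* S)
    (M : ModuleCat.{0} R) (r : R) (s : S) (x : M) :
    (HSMul.hSMul (α := S) (β := ↑((ModuleCat.extendScalars f).obj M)) (f r) (s ⊗ₜ[R,f] x)
        : (ModuleCat.extendScalars f).obj M)
      = (s ⊗ₜ[R,f] (r • x)) := by
  letI : Module R S := Module.compHom S f
  erw [ModuleCat.ExtendScalars.smul_tmul]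
  exact TensorProduct.smul_tmul r s x

variable (k : Type) [Field k] (p : ℕ)
variable (α : TruncPoly k p →ₐ[k] TruncPoly k p)

/-- Restriction of scalars along `α` preserves local finiteness. -/
lemma res_locFin (hα : ∀ i : ℕ, α (xgen k p i) = xgen k p (i + 1))
    (M : ModuleCat.{0} (TruncPoly k p)) (hM : IsLocallyFinite k p M.carrier) :
    @IsLocallyFinite k _ p ((ModuleCat.restrictScalars α.toRingHom).obj M).carrier
      ((ModuleCat.restrictScalars α.toRingHom).obj M).isAddCommGroup
      ((ModuleCat.restrictScalars α.toRingHom).obj M).isModule := by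
  intro m
  refine ((hM m).preimage (f := fun i => i + 1)
    (add_left_injective 1).injOn).subset ?_
  intro i hi
  exact fun h => hi (by
    rw [ModuleCat.restrictScalars.smul_def,show (α.toRingHom (xgen k p i)) = xgen k p (i + 1) from hα i]; exact h)

/-- Extension of scalars along `α` preserves local finiteness. -/
lemma ext_locFin (hα : ∀ i : ℕ, α (xgen k p i) = xgen k p (i + 1))
    (M : ModuleCat.{0} (TruncPoly k p)) (hM : IsLocallyFinite k p M.carrier) :
    IsLocallyFinite k p ((ModuleCat.extendScalars α.toRingHom).obj M).carrier := by
  intro m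
  induction m using TensorProduct.induction_on with
  | zero =>
    convert Set.finite_empty
    ext i
    simp only [Set.mem_setOf_eq, Set.mem_empty_iff_false, iff_false, not_not]
    exact smul_zero (A := (ModuleCat.extendScalars α.toRingHom).obj M) _
  | tmul s x =>
    refine ((((hM x).image (fun j => j + 1)).insert 0).subset ?_)
    intro i hi
    by_cases h0 : i = 0
    · exact h0 ▸ Set.mem_insert _ _
    · obtain ⟨j, rfl⟩ := Nat.exists_eq_succ_of_ne_zero h0
      refine Set.mem_insert_iff.mpr (Or.inr ⟨j, ?_, rfl⟩)
      intro h
      apply hi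
      show xgen k p (j + 1) • _ = 0
      rw [← hα j]
      refine Eq.trans (ext_smul_eq α.toRingHom M (xgen k p j) s x) ?_
      rw [h]; exact TensorProduct.tmul_zero (M := ↑((ModuleCat.restrictScalars α.toRingHom).obj (ModuleCat.of (TruncPoly k p) (TruncPoly k p)))) _ s
  | add a b ha hb =>
    refine (ha.union hb).subset ?_
    intro i hi
    simp only [Set.mem_setOf_eq, Set.mem_union] at hi ⊢
    by_contra hc
    push_neg at hc
    exact hi ((smul_add (A := (ModuleCat.extendScalars α.toRingHom).obj M) _ a b).trans (by rw [hc.1, hc.2, add_zero]))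

end Aux

set_option maxHeartbeats 1000000 in
set_option synthInstance.maxHeartbeats 1000000 in
theorem stmt_5 (k : Type) [Field k] (p : ℕ) [hp : Fact p.Prime] [CharP k p]
    (α : TruncPoly k p →ₐ[k] TruncPoly k p)
    (hα : ∀ i : ℕ, α (xgen k p i) = xgen k p (i + 1)) :
    ∃ (E Res : LocFinMod k p ⥤ LocFinMod k p),
      (∀ M : LocFinMod k p,
        Nonempty ((Res.obj M).obj ≅ (ModuleCat.restrictScalars α.toRingHom).obj M.obj)) ∧
      (∀ M : LocFinMod k p,
        Nonempty ((E.obj M).obj ≅ (ModuleCat.extendScalars α.toRingHom).obj M.obj)) ∧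
      Nonempty (E ⊣ Res) := by
  let E : LocFinMod k p ⥤ LocFinMod k p :=
    ObjectProperty.lift _ (ObjectProperty.ι _ ⋙ ModuleCat.extendScalars α.toRingHom)
      (fun M => ext_locFin k p α hα M.obj M.property)
  let Res : LocFinMod k p ⥤ LocFinMod k p :=
    ObjectProperty.lift _ (ObjectProperty.ι _ ⋙ ModuleCat.restrictScalars α.toRingHom)
      (fun M => res_locFin k p α hα M.obj M.property)
  let adj := ModuleCat.extendRestrictScalarsAdj.{0} α.toRingHom
  refine ⟨E, Res, fun M => ⟨Iso.refl _⟩, fun M => ⟨Iso.refl _⟩, ?_⟩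
  exact ⟨adj.restrictFullyFaithful (ObjectProperty.fullyFaithfulι _) (ObjectProperty.fullyFaithfulι _) (Iso.refl _) (Iso.refl _)⟩
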